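/- Let p > 0 and let (ξ_n)_{n≥0} be an increasing sequence of positive reals with ξ_0 = 1 satisfying the recursion (ξ_{n+1}^{-p} + ξ_n^{-p}) / (ξ_{n+1} − ξ_n) = p·[K + 1 + 2·Σ_{i=1}^n ξ_i^{-p-1}] for all n ≥ 0, where K > 0 is a fixed constant. Then ξ_n → +∞ as n → +∞. -/

import Mathlib

open Filter Real

theorem stmt_18 (p K : ℝ) (hp : 0 < p) (hK : 0 < K)
    (ξ : ℕ → ℝ) (hmono : StrictMono ξ) (h0 : ξ 0 = 1)
    (hpos : ∀ n, 0 < ξ n)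
    (hrec : ∀ n : ℕ,
      (ξ (n + 1) ^ (-p) + ξ n ^ (-p)) / (ξ (n + 1) - ξ n) =
        p * (K + 1 + 2 * ∑ i ∈ Finset.Icc 1 n, ξ i ^ (-p - 1))) :
    Tendsto ξ atTop atTop := by
  apply tendsto_atTop_atTop_of_monotone hmono.monotone
  by_contra hbdd
  push_neg at hbdd
  obtain ⟨b, hb⟩ := hbdd
  have hb1 : ∀ n, 1 ≤ ξ n := fun n => h0 ▸ hmono.monotone (Nat.zero_le n)
  have hbgt : 1 < b := lt_of_le_of_lt (hb1 0) (hb 0)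
  have hbpos : 0 < b := by linarith
  set c : ℝ := 2 * b ^ (-p) / (p * (K + 3)) with hc
  have hbp : 0 < b ^ (-p) := Real.rpow_pos_of_pos hbpos _
  have hcpos : 0 < c := div_pos (by linarith) (mul_pos hp (by linarith))
  -- difference lower bound
  have hdiff : ∀ n : ℕ, c * (1 / (n + 1)) ≤ ξ (n + 1) - ξ n := by
    intro n
    have hd : 0 < ξ (n + 1) - ξ n := sub_pos.2 (hmono (lt_add_one n))
    set S : ℝ := ∑ i ∈ Finset.Icc 1 n, ξ i ^ (-p - 1) with hS
    have hS0 : 0 ≤ S :=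
      Finset.sum_nonneg fun i _ => (Real.rpow_pos_of_pos (hpos i) _).le
    have hSn : S ≤ n := by
      calc S ≤ ∑ i ∈ Finset.Icc 1 n, (1 : ℝ) := by
              apply Finset.sum_le_sum
              intro i _
              exact Real.rpow_le_one_of_one_le_of_nonpos (hb1 i) (by linarith)
        _ = n := by simp
    have hR : 0 < p * (K + 1 + 2 * S) := mul_pos hp (by linarith)
    have hA : 2 * b ^ (-p) ≤ ξ (n + 1) ^ (-p) + ξ n ^ (-p) := by
      have h1 : b ^ (-p) ≤ ξ (n + 1) ^ (-p) :=
        Real.rpow_le_rpow_of_nonpos (hpos _) (hb _).le (by linarith)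
      have h2 : b ^ (-p) ≤ ξ n ^ (-p) :=
        Real.rpow_le_rpow_of_nonpos (hpos _) (hb _).le (by linarith)
      linarith
    have heq : ξ (n + 1) - ξ n =
        (ξ (n + 1) ^ (-p) + ξ n ^ (-p)) / (p * (K + 1 + 2 * S)) := by
      have h := hrec n
      rw [div_eq_iff hd.ne'] at h
      rw [h, ← hS]
      field_simp
    rw [heq]
    have hn : (0:ℝ) ≤ n := Nat.cast_nonneg n
    calc c * (1 / (n + 1)) = 2 * b ^ (-p) / (p * (K + 3) * (n + 1)) := by
          rw [hc]; field_simp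
      _ ≤ 2 * b ^ (-p) / (p * (K + 1 + 2 * S)) := by
          apply div_le_div_of_nonneg_left (by linarith) hR
          have h1 : K + 1 + 2 * S ≤ (K + 3) * (↑n + 1) := by nlinarith [mul_nonneg hK.le hn]
          nlinarith [mul_le_mul_of_nonneg_left h1 hp.le]
      _ ≤ (ξ (n + 1) ^ (-p) + ξ n ^ (-p)) / (p * (K + 1 + 2 * S)) := by
          gcongr
  -- partial sums
  have hsum : ∀ N : ℕ, 1 + c * ∑ i ∈ Finset.range N, (1 / (i + 1) : ℝ) ≤ ξ N := by
    intro N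
    have h1 : ∑ i ∈ Finset.range N, (ξ (i + 1) - ξ i) = ξ N - ξ 0 :=
      Finset.sum_range_sub ξ N
    have h2 : c * ∑ i ∈ Finset.range N, (1 / (i + 1) : ℝ) ≤
        ∑ i ∈ Finset.range N, (ξ (i + 1) - ξ i) := by
      rw [Finset.mul_sum]
      exact Finset.sum_le_sum fun i _ => hdiff i
    rw [h1, h0] at h2
    linarith
  -- divergence of harmonic series
  have hdiv := Real.tendsto_sum_range_one_div_nat_succ_atTop
  obtain ⟨N, hN⟩ := (hdiv.eventually_ge_atTop (b / c)).exists
  have : 1 + c * (b / c) ≤ ξ N := by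
    refine le_trans ?_ (hsum N)
    have := mul_le_mul_of_nonneg_left hN hcpos.le
    linarith
  rw [mul_div_cancel₀ _ hcpos.ne'] at this
  exact absurd (hb N) (by linarith)
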